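/- arXiv:2202.11666 — 2 statements merged into one kernel-verified Lean document; each statement's English description precedes it below -/
import Mathlib

section
/- (Tensor model for monotone independence.) Let C be a unital ℂ-algebra, let B ⊆ C be a unital subalgebra, let ω̃, τ : C → ℂ be linear maps, let a₁, …, a_p ∈ C, and let b₀, b₁, …, b_q ∈ B with b₀ = 1. Assume: (i) τ(1) = 1, τ(b_i) = 0 for 1 ≤ i ≤ q, and τ(b_i b_j) = δ_{ij} for 1 ≤ i, j ≤ q; (ii) the pair is monotone: for every m ≥ 1, j₁, …, j_m ∈ {1,…,p}, and c₀, c₁, …, c_m ∈ B, one has ω̃(c₀ a_{j₁} c₁ a_{j₂} c₂ ⋯ a_{j_m} c_m) = ω̃(a_{j₁} ⋯ a_{j_m}) τ(c₀) τ(c₁) ⋯ τ(c_m); (iii) there are matrices A₁, …, A_p ∈ M_n(ℂ) with ω̃(a_{j₁} ⋯ a_{j_m}) = Tr(A_{j₁} ⋯ A_{j_m}) for all m ≥ 1 and j₁,…,j_m ∈ {1,…,p}. Given coefficients λ_{i₁,i₂,j} ∈ ℂ, set P = Σ_{i₁,i₂,j} λ_{i₁,i₂,j} b_{i₁} a_j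 b_{i₂} ∈ C and P̃ = Σ_{i₁,i₂,j} λ_{i₁,i₂,j} (I_n ⊗ B_{i₁}) (A_j ⊗ E) (I_n ⊗ B_{i₂}) ∈ M_n(ℂ) ⊗ M_{2^q}(ℂ). Then for every k ≥ 1, ω̃(P^k) = (Tr_n ⊗ η^{⊗q})(P̃^k), where (Tr_n ⊗ η^{⊗q})(M) denotes the sum over i ∈ {0,…,n−1} of the entries M((i,(0,…,0)), (i,(0,…,0))). -/
open Matrix BigOperators

/-- The 2×2 flip matrix `J = [[0,1],[1,0]]`. -/
noncomputable def J2 : Matrix (Fin 2) (Fin 2) ℂ := !![0, 1; 1, 0]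

/-- The 2×2 matrix unit `E₁₁ = [[1,0],[0,0]]`. -/
noncomputable def E11 : Matrix (Fin 2) (Fin 2) ℂ := !![1, 0; 0, 0]

/-- `Bq q i` for `i = 1,…,q` is the Kronecker product with `J` in the `i`-th tensor factor and
the identity elsewhere; `Bq q 0` is the identity of `M_{2^q}(ℂ)`.  Here `M_{2^q}(ℂ)` is realized
as matrices indexed by `Fin q → Fin 2`, and the Kronecker product entrywise is the product of the
entries of the factors. -/
noncomputable def Bq (q : ℕ) (i : Fin (q + 1)) :
    Matrix (Fin q → Fin 2) (Fin q → Fin 2) ℂ :=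
  Matrix.of fun s t => ∏ j : Fin q,
    (if ((j : ℕ) + 1 = (i : ℕ)) then J2 else (1 : Matrix (Fin 2) (Fin 2) ℂ)) (s j) (t j)

/-- `Etens q = E₁₁^{⊗q}`. -/
noncomputable def Etens (q : ℕ) : Matrix (Fin q → Fin 2) (Fin q → Fin 2) ℂ :=
  Matrix.of fun s t => ∏ j : Fin q, E11 (s j) (t j)

lemma sum_pow_list {R : Type*} [Semiring R] {T : Type*} [Fintype T] (x : T → R) (k : ℕ) :
    (∑ t, x t) ^ k = ∑ g : Fin k → T, (List.ofFn fun r => x (g r)).prod := by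
  induction k with
  | zero => simp
  | succ k ih =>
    rw [pow_succ', ih, Finset.sum_mul_sum,
      ← Equiv.sum_comp (Fin.consEquiv fun _ => T)
        (fun g => (List.ofFn fun r => x (g r)).prod), Fintype.sum_prod_type]
    apply Finset.sum_congr rfl
    intro t _
    apply Finset.sum_congr rfl
    intro g _
    simp [List.ofFn_succ, Fin.consEquiv]

lemma mySmul_list_prod {R : Type*} [Semiring R] [Algebra ℂ R] {k : ℕ}
    (c : Fin k → ℂ) (m : Fin k → R) :
    (List.ofFn fun r => c r • m r).prod = (∏ r, c r) • (List.ofFn m).prod := by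
  induction k with
  | zero => simp
  | succ k ih =>
    rw [List.ofFn_succ, List.ofFn_succ (f := m), List.prod_cons, List.prod_cons,
      ih, Fin.prod_univ_succ, smul_mul_smul_comm]

lemma word_reshape {M : Type*} [Monoid M] (u v w : ℕ → M) (k : ℕ) :
    (List.ofFn fun r : Fin k => u r * w r * v r).prod * u k
      = u 0 * (List.ofFn fun r : Fin k => w r * (v r * u (r + 1))).prod := by
  induction k with
  | zero => simp
  | succ k ih =>
    rw [List.ofFn_succ' (f := fun r : Fin (k+1) => u r * w r * v r),
      List.ofFn_succ' (f := fun r : Fin (k+1) => w r * (v r * u (r + 1))),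
      List.concat_eq_append, List.concat_eq_append, List.prod_append, List.prod_append]
    simp only [Fin.coe_castSucc, Fin.val_last, List.prod_cons, List.prod_nil, mul_one]
    calc (List.ofFn fun r : Fin k => u r * w r * v r).prod * (u k * w k * v k) * u (k+1)
        = ((List.ofFn fun r : Fin k => u r * w r * v r).prod * u k)
            * (w k * (v k * u (k+1))) := by simp only [mul_assoc]
      _ = u 0 * ((List.ofFn fun r : Fin k => w r * (v r * u (r + 1))).prod
            * (w k * (v k * u (k+1)))) := by rw [ih, mul_assoc]

lemma E11_apply (x y : Fin 2) : E11 x y = if x = 0 ∧ y = 0 then 1 else 0 := by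
  fin_cases x <;> fin_cases y <;> simp [E11]

lemma Etens_apply (q : ℕ) (s t : Fin q → Fin 2) :
    Etens q s t = if s = (fun _ => 0) ∧ t = (fun _ => 0) then 1 else 0 := by
  simp only [Etens, Matrix.of_apply, E11_apply]
  by_cases h : s = (fun _ => 0) ∧ t = (fun _ => 0)
  · obtain ⟨h1, h2⟩ := h
    subst h1; subst h2; simp
  · rw [if_neg h]
    rw [not_and_or] at h
    have : ∃ j : Fin q, ¬(s j = 0 ∧ t j = 0) := by
      rcases h with h | h
      · obtain ⟨j, hj⟩ := Function.ne_iff.mp h; exact ⟨j, fun hc => hj hc.1⟩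
      · obtain ⟨j, hj⟩ := Function.ne_iff.mp h; exact ⟨j, fun hc => hj hc.2⟩
    obtain ⟨j, hj⟩ := this
    exact Finset.prod_eq_zero (Finset.mem_univ j) (by rw [if_neg hj])

lemma Bq_zero (q : ℕ) : Bq q 0 = 1 := by
  ext s t
  simp only [Bq, Matrix.of_apply, Fin.val_zero, Nat.succ_ne_zero, if_false]
  by_cases h : s = t
  · subst h; simp [Matrix.one_apply]
  · obtain ⟨j, hj⟩ := Function.ne_iff.mp h
    rw [Matrix.one_apply_ne h]
    exact Finset.prod_eq_zero (Finset.mem_univ j) (Matrix.one_apply_ne hj)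

lemma EXE (q : ℕ) (X : Matrix (Fin q → Fin 2) (Fin q → Fin 2) ℂ) :
    Etens q * X * Etens q = X (fun _ => 0) (fun _ => 0) • Etens q := by
  ext s t
  simp only [Matrix.mul_apply, Etens_apply, Matrix.smul_apply, smul_eq_mul]
  simp [ite_and, Finset.sum_ite_eq, Finset.mul_sum, Finset.sum_mul, mul_comm]
  split <;> split <;> simp_all

lemma Bq_zz (q : ℕ) (i : Fin (q + 1)) :
    Bq q i (fun _ => 0) (fun _ => 0) = if i = 0 then 1 else 0 := by
  by_cases h : i = 0
  · subst h; simp [Bq_zero, Matrix.one_apply]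
  · rw [if_neg h]
    have hi : (i : ℕ) ≠ 0 := fun hc => h (Fin.ext hc)
    have h1 : 1 ≤ (i : ℕ) := Nat.one_le_iff_ne_zero.mpr hi
    have h2 : (i : ℕ) - 1 < q := by omega
    refine Finset.prod_eq_zero (Finset.mem_univ (⟨(i : ℕ) - 1, h2⟩ : Fin q)) ?_
    rw [if_pos (Nat.sub_add_cancel h1)]
    simp [J2]

lemma J2J2 : J2 * J2 = 1 := by
  ext x y
  fin_cases x <;> fin_cases y <;>
    simp [J2, Matrix.mul_apply, Fin.sum_univ_two, Matrix.one_apply]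

lemma BqBq_zz (q : ℕ) (i j : Fin (q + 1)) :
    (Bq q i * Bq q j) (fun _ => 0) (fun _ => 0) = if i = j then 1 else 0 := by
  have key : (Bq q i * Bq q j) (fun _ => 0) (fun _ => 0)
      = ∏ m : Fin q, ((if ((m : ℕ) + 1 = (i : ℕ)) then J2 else 1)
          * (if ((m : ℕ) + 1 = (j : ℕ)) then J2 else 1)) 0 0 := by
    have : ∀ m : Fin q, ((if ((m : ℕ) + 1 = (i : ℕ)) then J2 else 1)
          * (if ((m : ℕ) + 1 = (j : ℕ)) then J2 else 1)) 0 0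
        = ∑ x : Fin 2, (if ((m : ℕ) + 1 = (i : ℕ)) then J2 else 1) 0 x
            * (if ((m : ℕ) + 1 = (j : ℕ)) then J2 else 1) x 0 := fun m => Matrix.mul_apply ..
    simp only [this]
    rw [Finset.prod_univ_sum, Matrix.mul_apply]
    rw [← Fintype.piFinset_univ]
    apply Finset.sum_congr rfl
    intro s _
    simp only [Bq, Matrix.of_apply]
    rw [← Finset.prod_mul_distrib]
  rw [key]
  by_cases h : i = j
  · subst h
    rw [if_pos rfl]
    apply Finset.prod_eq_one
    intro m _
    by_cases hm : (m : ℕ) + 1 = (i : ℕ)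
    · rw [if_pos hm, J2J2, Matrix.one_apply_eq]
    · rw [if_neg hm, one_mul, Matrix.one_apply_eq]
  · rw [if_neg h]
    have hij : (i : ℕ) ≠ (j : ℕ) := fun hc => h (Fin.ext hc)
    by_cases hi : (i : ℕ) = 0
    · have hj : 1 ≤ (j : ℕ) := by omega
      have h2 : (j : ℕ) - 1 < q := by omega
      refine Finset.prod_eq_zero (Finset.mem_univ (⟨(j : ℕ) - 1, h2⟩ : Fin q)) ?_
      have e1 : ((⟨(j : ℕ) - 1, h2⟩ : Fin q) : ℕ) + 1 = (j : ℕ) :=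
        Nat.sub_add_cancel hj
      have e2 : ¬ (((⟨(j : ℕ) - 1, h2⟩ : Fin q) : ℕ) + 1 = (i : ℕ)) := by
        rw [e1]; omega
      rw [if_neg e2, if_pos e1, one_mul]
      simp [J2]
    · have h1 : 1 ≤ (i : ℕ) := by omega
      have h2 : (i : ℕ) - 1 < q := by omega
      refine Finset.prod_eq_zero (Finset.mem_univ (⟨(i : ℕ) - 1, h2⟩ : Fin q)) ?_
      have e1 : ((⟨(i : ℕ) - 1, h2⟩ : Fin q) : ℕ) + 1 = (i : ℕ) :=
        Nat.sub_add_cancel h1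
      have e2 : ¬ (((⟨(i : ℕ) - 1, h2⟩ : Fin q) : ℕ) + 1 = (j : ℕ)) := by
        rw [e1]; omega
      rw [if_pos e1, if_neg e2, mul_one]
      simp [J2]

lemma Mfin (q : ℕ) (k : ℕ) (C : ℕ → Matrix (Fin q → Fin 2) (Fin q → Fin 2) ℂ) :
    (List.ofFn fun r : Fin k => Etens q * C r).prod * Etens q
      = (∏ r ∈ Finset.range k, C r (fun _ => 0) (fun _ => 0)) • Etens q := by
  induction k generalizing C with
  | zero => simp
  | succ k ih =>
    rw [List.ofFn_succ, List.prod_cons, Finset.prod_range_succ']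
    simp only [Fin.val_succ, Fin.val_zero]
    rw [mul_assoc, ih (fun r => C (r + 1)), mul_smul_comm, EXE, smul_smul]

lemma kron_list (n q : ℕ) (k : ℕ) (X : Fin k → Matrix (Fin n) (Fin n) ℂ)
    (Y : Fin k → Matrix (Fin q → Fin 2) (Fin q → Fin 2) ℂ) :
    (List.ofFn fun r => Matrix.kroneckerMap (· * ·) (X r) (Y r)).prod
      = Matrix.kroneckerMap (· * ·) (List.ofFn X).prod (List.ofFn Y).prod := by
  induction k with
  | zero => simp [Matrix.one_kronecker_one]
  | succ k ih =>
    rw [List.ofFn_succ, List.ofFn_succ (f := X), List.ofFn_succ (f := Y),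
      List.prod_cons, List.prod_cons, List.prod_cons, ih, Matrix.mul_kronecker_mul]


/-- Tensor model for monotone independence: under the same setup as for the cyclic monotone
case, but with the pair being monotone with respect to `(τ, ω̃)`, one has
`ω̃(P^k) = (Tr_n ⊗ η^{⊗q})(P̃^k)` for all `k ≥ 1`, where `(Tr_n ⊗ η^{⊗q})(M)` is the sum over
`i` of the entries `M((i,(0,…,0)),(i,(0,…,0)))`. -/
theorem tensor_model_monotone {C : Type*} [Ring C] [Algebra ℂ C]
    (Bsub : Subalgebra ℂ C) (ωt τ : C →ₗ[ℂ] ℂ)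
    (p q n : ℕ) (a : Fin p → C) (b : Fin (q + 1) → C)
    (hb0 : b 0 = 1) (hbB : ∀ i, b i ∈ Bsub)
    (hτ1 : τ 1 = 1)
    (hτb : ∀ i : Fin (q + 1), i ≠ 0 → τ (b i) = 0)
    (hτbb : ∀ i j : Fin (q + 1), i ≠ 0 → j ≠ 0 →
      τ (b i * b j) = if i = j then 1 else 0)
    (hmono : ∀ m : ℕ, 1 ≤ m → ∀ (j : ℕ → Fin p) (c : ℕ → C), (∀ r, c r ∈ Bsub) →
      ωt (c 0 * (List.ofFn fun r : Fin m => a (j ((r : ℕ) + 1)) * c ((r : ℕ) + 1)).prod)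
        = ωt ((List.ofFn fun r : Fin m => a (j ((r : ℕ) + 1))).prod)
          * ∏ r ∈ Finset.range (m + 1), τ (c r))
    (A : Fin p → Matrix (Fin n) (Fin n) ℂ)
    (hA : ∀ m : ℕ, 1 ≤ m → ∀ j : ℕ → Fin p,
      ωt ((List.ofFn fun r : Fin m => a (j ((r : ℕ) + 1))).prod)
        = Matrix.trace ((List.ofFn fun r : Fin m => A (j ((r : ℕ) + 1))).prod))
    (lam : Fin (q + 1) → Fin (q + 1) → Fin p → ℂ)
    (k : ℕ) (hk : 1 ≤ k) :
    ωt ((∑ i₁ : Fin (q + 1), ∑ i₂ : Fin (q + 1), ∑ j : Fin p,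
          lam i₁ i₂ j • (b i₁ * a j * b i₂)) ^ k)
      = ∑ i : Fin n,
          ((∑ i₁ : Fin (q + 1), ∑ i₂ : Fin (q + 1), ∑ j : Fin p,
            lam i₁ i₂ j •
              (Matrix.kroneckerMap (· * ·) (1 : Matrix (Fin n) (Fin n) ℂ) (Bq q i₁)
                * Matrix.kroneckerMap (· * ·) (A j) (Etens q)
                * Matrix.kroneckerMap (· * ·) (1 : Matrix (Fin n) (Fin n) ℂ) (Bq q i₂))) ^ k)
            (i, fun _ => 0) (i, fun _ => 0) := by
  classical
  -- combine the triple sums into a single sum over a product type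
  have hL : (∑ i₁ : Fin (q + 1), ∑ i₂ : Fin (q + 1), ∑ j : Fin p,
        lam i₁ i₂ j • (b i₁ * a j * b i₂))
      = ∑ t : Fin (q + 1) × Fin (q + 1) × Fin p,
          lam t.1 t.2.1 t.2.2 • (b t.1 * a t.2.2 * b t.2.1) := by
    rw [Fintype.sum_prod_type]
    exact Finset.sum_congr rfl fun i₁ _ => by rw [Fintype.sum_prod_type]
  have hR : (∑ i₁ : Fin (q + 1), ∑ i₂ : Fin (q + 1), ∑ j : Fin p,
        lam i₁ i₂ j •
          (Matrix.kroneckerMap (· * ·) (1 : Matrix (Fin n) (Fin n) ℂ) (Bq q i₁)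
            * Matrix.kroneckerMap (· * ·) (A j) (Etens q)
            * Matrix.kroneckerMap (· * ·) (1 : Matrix (Fin n) (Fin n) ℂ) (Bq q i₂)))
      = ∑ t : Fin (q + 1) × Fin (q + 1) × Fin p,
          lam t.1 t.2.1 t.2.2 •
            (Matrix.kroneckerMap (· * ·) (1 : Matrix (Fin n) (Fin n) ℂ) (Bq q t.1)
              * Matrix.kroneckerMap (· * ·) (A t.2.2) (Etens q)
              * Matrix.kroneckerMap (· * ·) (1 : Matrix (Fin n) (Fin n) ℂ) (Bq q t.2.1)) := by
    rw [Fintype.sum_prod_type]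
    exact Finset.sum_congr rfl fun i₁ _ => by rw [Fintype.sum_prod_type]
  rw [hL, hR, sum_pow_list, sum_pow_list, map_sum]
  simp only [Matrix.sum_apply]
  rw [Finset.sum_comm]
  apply Finset.sum_congr rfl
  intro g _
  -- componentwise index functions on ℕ
  set I1n : ℕ → Fin (q + 1) := fun r => if h : r < k then (g ⟨r, h⟩).1 else 0 with hI1n
  set I2n : ℕ → Fin (q + 1) := fun r => if h : r < k then (g ⟨r, h⟩).2.1 else 0 with hI2n
  set Jn : ℕ → Fin p :=
    fun r => if h : r - 1 < k then (g ⟨r - 1, h⟩).2.2 else (g ⟨0, hk⟩).2.2 with hJn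
  have hI1 : ∀ r : Fin k, I1n (r : ℕ) = (g r).1 := fun r => by
    simp [hI1n, r.isLt]
  have hI2 : ∀ r : Fin k, I2n (r : ℕ) = (g r).2.1 := fun r => by
    simp [hI2n, r.isLt]
  have hJ : ∀ r : Fin k, Jn ((r : ℕ) + 1) = (g r).2.2 := fun r => by
    simp [hJn, r.isLt]
  have hI1k : I1n k = 0 := dif_neg (lt_irrefl k)
  set cfun : ℕ → C := fun r =>
    match r with
    | 0 => b (I1n 0)
    | (s + 1) => b (I2n s) * b (I1n (s + 1)) with hcfun
  have hc : ∀ r, cfun r ∈ Bsub := by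
    intro r
    match r with
    | 0 => exact hbB _
    | (s + 1) => exact mul_mem (hbB _) (hbB _)
  -- τ-values as matrix entries
  have ht1 : ∀ i : Fin (q + 1), τ (b i) = Bq q i (fun _ => 0) (fun _ => 0) := by
    intro i
    rw [Bq_zz]
    by_cases h : i = 0
    · subst h; rw [hb0, hτ1, if_pos rfl]
    · rw [if_neg h, hτb i h]
  have ht2 : ∀ i j : Fin (q + 1), τ (b i * b j) = (Bq q i * Bq q j) (fun _ => 0) (fun _ => 0) := by
    intro i j
    rw [BqBq_zz]
    by_cases hi : i = 0
    · subst hi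
      rw [hb0, one_mul]
      by_cases hj : j = 0
      · subst hj; rw [hb0, hτ1, if_pos rfl]
      · rw [hτb j hj, if_neg (fun hc => hj hc.symm)]
    · by_cases hj : j = 0
      · subst hj; rw [hb0, mul_one, hτb i hi, if_neg hi]
      · exact hτbb i j hi hj
  -- LHS term computation
  have hLterm : ωt ((List.ofFn fun r : Fin k =>
        lam (g r).1 (g r).2.1 (g r).2.2 • (b (g r).1 * a (g r).2.2 * b (g r).2.1)).prod)
      = (∏ r : Fin k, lam (g r).1 (g r).2.1 (g r).2.2)
          * (Matrix.trace ((List.ofFn fun r : Fin k => A ((g r).2.2)).prod)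
            * ((∏ r ∈ Finset.range k, τ (cfun (r + 1))) * τ (cfun 0))) := by
    rw [mySmul_list_prod, _root_.map_smul, smul_eq_mul]
    congr 1
    have hword : (List.ofFn fun r : Fin k => b (g r).1 * a (g r).2.2 * b (g r).2.1).prod
        = cfun 0 * (List.ofFn fun r : Fin k =>
            a (Jn ((r : ℕ) + 1)) * cfun ((r : ℕ) + 1)).prod := by
      have hw := word_reshape (fun r => b (I1n r)) (fun r => b (I2n r))
        (fun r => a (Jn (r + 1))) k
      rw [hI1k, hb0, mul_one] at hw
      calc (List.ofFn fun r : Fin k => b (g r).1 * a (g r).2.2 * b (g r).2.1).prod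
          = (List.ofFn fun r : Fin k =>
              b (I1n (r : ℕ)) * a (Jn ((r : ℕ) + 1)) * b (I2n (r : ℕ))).prod := by
            refine congrArg List.prod (congrArg List.ofFn (funext fun r => ?_))
            rw [hI1, hI2, hJ]
        _ = b (I1n 0) * (List.ofFn fun r : Fin k =>
              a (Jn ((r : ℕ) + 1)) * (b (I2n (r : ℕ)) * b (I1n ((r : ℕ) + 1)))).prod := hw
        _ = cfun 0 * (List.ofFn fun r : Fin k =>
              a (Jn ((r : ℕ) + 1)) * cfun ((r : ℕ) + 1)).prod := rfl
    rw [hword, hmono k hk Jn cfun hc, hA k hk Jn, Finset.prod_range_succ']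
    rw [show (List.ofFn fun r : Fin k => A (Jn ((r : ℕ) + 1)))
        = List.ofFn fun r : Fin k => A ((g r).2.2) from
      congrArg List.ofFn (funext fun r => by rw [hJ])]
  rw [hLterm]
  -- RHS term computation
  set Cf : ℕ → Matrix (Fin q → Fin 2) (Fin q → Fin 2) ℂ := fun r =>
    match r with
    | 0 => Bq q (I1n 0)
    | (s + 1) => Bq q (I2n s) * Bq q (I1n (s + 1)) with hCf
  set W : Matrix (Fin q → Fin 2) (Fin q → Fin 2) ℂ :=
    (List.ofFn fun r : Fin k => Bq q (I1n (r : ℕ)) * Etens q * Bq q (I2n (r : ℕ))).prod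
    with hW
  have hRterm : ∑ i : Fin n,
      ((List.ofFn fun r : Fin k =>
        lam (g r).1 (g r).2.1 (g r).2.2 •
          (Matrix.kroneckerMap (· * ·) (1 : Matrix (Fin n) (Fin n) ℂ) (Bq q (g r).1)
            * Matrix.kroneckerMap (· * ·) (A (g r).2.2) (Etens q)
            * Matrix.kroneckerMap (· * ·) (1 : Matrix (Fin n) (Fin n) ℂ) (Bq q (g r).2.1))).prod)
        (i, fun _ => 0) (i, fun _ => 0)
      = (∏ r : Fin k, lam (g r).1 (g r).2.1 (g r).2.2)
          * (Matrix.trace ((List.ofFn fun r : Fin k => A ((g r).2.2)).prod)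
            * W (fun _ => 0) (fun _ => 0)) := by
    have hfac : (List.ofFn fun r : Fin k =>
          lam (g r).1 (g r).2.1 (g r).2.2 •
            (Matrix.kroneckerMap (· * ·) (1 : Matrix (Fin n) (Fin n) ℂ) (Bq q (g r).1)
              * Matrix.kroneckerMap (· * ·) (A (g r).2.2) (Etens q)
              * Matrix.kroneckerMap (· * ·) (1 : Matrix (Fin n) (Fin n) ℂ) (Bq q (g r).2.1)))
        = List.ofFn fun r : Fin k =>
            lam (g r).1 (g r).2.1 (g r).2.2 •
              Matrix.kroneckerMap (· * ·) (A (g r).2.2)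
                (Bq q (I1n (r : ℕ)) * Etens q * Bq q (I2n (r : ℕ))) := by
      refine congrArg List.ofFn (funext fun r => ?_)
      rw [hI1, hI2, ← Matrix.mul_kronecker_mul, ← Matrix.mul_kronecker_mul,
        one_mul, mul_one]
    rw [hfac, mySmul_list_prod, kron_list]
    simp only [Matrix.smul_apply, Matrix.kroneckerMap_apply, smul_eq_mul]
    rw [← Finset.mul_sum, ← Finset.sum_mul]
    rw [Matrix.trace]
    simp only [Matrix.diag]
    rfl
  rw [hRterm]
  -- compute W (0,0)
  have hWV := word_reshape (fun r => Bq q (I1n r)) (fun r => Bq q (I2n r))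
    (fun _ => Etens q) k
  rw [hI1k, Bq_zero, mul_one, ← hW] at hWV
  have hL2 : (List.ofFn fun r : Fin (k + 1) => Etens q * Cf (r : ℕ)).prod
      = Etens q * W := by
    rw [List.ofFn_succ, List.prod_cons]
    simp only [Fin.val_succ, Fin.val_zero]
    rw [hWV]
    rw [← mul_assoc]
  have hMf := Mfin q (k + 1) Cf
  rw [hL2] at hMf
  have hEWE : Etens q * W * Etens q
      = W (fun _ => 0) (fun _ => 0) • Etens q := EXE q W
  have hWzz : W (fun _ => 0) (fun _ => 0)
      = ∏ r ∈ Finset.range (k + 1), Cf r (fun _ => 0) (fun _ => 0) := by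
    have := congrArg (fun M => M (fun _ : Fin q => (0 : Fin 2)) (fun _ => 0))
      (hEWE.symm.trans hMf)
    simpa [Etens_apply] using this
  rw [hWzz, Finset.prod_range_succ']
  have hcf0 : τ (cfun 0) = Cf 0 (fun _ => 0) (fun _ => 0) := ht1 (I1n 0)
  have hcfs : ∀ r : ℕ, τ (cfun (r + 1)) = Cf (r + 1) (fun _ => 0) (fun _ => 0) :=
    fun r => ht2 (I2n r) (I1n (r + 1))
  rw [hcf0, Finset.prod_congr rfl fun r _ => hcfs r]
end

section
/- (Explicit moment formula in the monotone case.) Let C be a unital ℂ-algebra, B ⊆ C a unital subalgebra, ω̃, τ : C → ℂ linear, a₁,…,a_p ∈ C, and b₀ = 1, b₁,…,b_q ∈ B with τ(1) = 1, τ(b_i) = 0 (1 ≤ i ≤ q), τ(b_i b_j) = δ_{ij} (1 ≤ i,j ≤ q), satisfying the monotone factorization rule: for every m ≥ 1, j₁,…,j_m ∈ {1,…,p} and c₀,…,c_m ∈ B, ω̃(c₀ a_{j₁} c₁ ⋯ a_{j_m} c_m) = ω̃(a_{j₁} ⋯ a_{j_m}) τ(c₀) τ(c₁) ⋯ τ(c_m).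 For coefficients λ_{i₁,i₂,j} ∈ ℂ set P = Σ_{i₁,i₂=0}^{q} Σ_{j=1}^{p} λ_{i₁,i₂,j} b_{i₁} a_j b_{i₂}. Then for every k ≥ 2, ω̃(P^k) = Σ_{i₂,i₄,…,i_{2k−2}=0}^{q} Σ_{j₁,…,j_k=1}^{p} λ_{0,i₂,j₁} (∏_{r=2}^{k−1} λ_{i_{2r−2}, i_{2r}, j_r}) λ_{i_{2k−2},0,j_k} ω̃(a_{j₁} ⋯ a_{j_k}). -/
open BigOperators

theorem sum_pow_fn {R ι : Type*} [Semiring R] [Fintype ι] (g : ι → R) :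
    ∀ n : ℕ, (∑ i, g i) ^ n = ∑ f : Fin n → ι, (List.ofFn fun r => g (f r)).prod := by
  intro n
  induction n with
  | zero => simp
  | succ n ih =>
      rw [pow_succ', ih, Finset.sum_mul_sum]
      refine (Fintype.sum_prod_type
        (f := fun xy : ι × (Fin n → ι) => g xy.1 * (List.ofFn fun r => g (xy.2 r)).prod)).symm.trans ?_
      refine Fintype.sum_equiv (Fin.consEquiv fun _ => ι)
        (fun xy => g xy.1 * (List.ofFn fun r => g (xy.2 r)).prod)
        (fun f => (List.ofFn fun r => g (f r)).prod) ?_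
      intro x
      simp [List.ofFn_succ, Fin.consEquiv]

theorem ofFn_smul_prod {R A : Type*} [CommSemiring R] [Semiring A] [Algebra R A]
    (n : ℕ) (c : Fin n → R) (m : Fin n → A) :
    (List.ofFn fun r => c r • m r).prod = (∏ r, c r) • (List.ofFn m).prod := by
  induction n with
  | zero => simp
  | succ n ih =>
      rw [List.ofFn_succ, List.ofFn_succ, List.prod_cons, List.prod_cons,
        ih (fun r => c r.succ) (fun r => m r.succ), Fin.prod_univ_succ,
        smul_mul_smul_comm]

theorem regroup {C : Type*} [Monoid C] :
    ∀ (n : ℕ) (u v w : ℕ → C), u n = 1 →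
    (List.ofFn fun r : Fin n => u r * v r * w r).prod
      = u 0 * (List.ofFn fun r : Fin n => v (r : ℕ) * (w r * u ((r : ℕ) + 1))).prod := by
  intro n
  induction n with
  | zero => intro u v w h; simpa using h.symm
  | succ n ih =>
      intro u v w h
      rw [List.ofFn_succ, List.ofFn_succ, List.prod_cons, List.prod_cons]
      have := ih (fun r => u (r+1)) (fun r => v (r+1)) (fun r => w (r+1)) h
      simp only [Fin.val_succ] at this ⊢
      rw [this]
      simp [mul_assoc]

theorem key_step {C : Type*} [Ring C] [Algebra ℂ C]
    (Bsub : Subalgebra ℂ C) (ωt τ : C →ₗ[ℂ] ℂ)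
    (p q : ℕ) (a : Fin p → C) (b : Fin (q + 1) → C)
    (hbB : ∀ i, b i ∈ Bsub)
    (hτb' : ∀ i : Fin (q+1), τ (b i) = if i = 0 then 1 else 0)
    (hτbb' : ∀ i j : Fin (q+1), τ (b i * b j) = if i = j then 1 else 0)
    (hmono : ∀ m : ℕ, 1 ≤ m → ∀ (j : ℕ → Fin p) (c : ℕ → C), (∀ r, c r ∈ Bsub) →
      ωt (c 0 * (List.ofFn fun r : Fin m => a (j ((r : ℕ) + 1)) * c ((r : ℕ) + 1)).prod)
        = ωt ((List.ofFn fun r : Fin m => a (j ((r : ℕ) + 1))).prod)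
          * ∏ r ∈ Finset.range (m + 1), τ (c r))
    (lam : Fin (q + 1) → Fin (q + 1) → Fin p → ℂ) (e : ℕ)
    (f : Fin (e+2) → Fin (q+1) × Fin (q+1) × Fin p) :
    ωt ((List.ofFn fun r : Fin (e+2) =>
        lam (f r).1 (f r).2.1 (f r).2.2 • (b (f r).1 * a (f r).2.2 * b (f r).2.1)).prod)
      = (∏ r : Fin (e+2), lam (f r).1 (f r).2.1 (f r).2.2)
        * (ωt ((List.ofFn fun r : Fin (e+2) => a ((f r).2.2)).prod)
          * ((∏ r : Fin (e+2), (if h : (r:ℕ)+1 < e+2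
                then (if (f r).2.1 = (f ⟨(r:ℕ)+1, h⟩).1 then (1:ℂ) else 0)
                else (if (f r).2.1 = 0 then (1:ℂ) else 0)))
            * (if (f 0).1 = 0 then (1:ℂ) else 0))) := by
  classical
  rw [ofFn_smul_prod, map_smul, smul_eq_mul]
  congr 1
  set uN : ℕ → C := fun n => if h : n < e+2 then b ((f ⟨n,h⟩).1) else 1 with huN
  set vN : ℕ → C := fun n => if h : n < e+2 then a ((f ⟨n,h⟩).2.2) else 1 with hvN
  set wN : ℕ → C := fun n => if h : n < e+2 then b ((f ⟨n,h⟩).2.1) else 1 with hwN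
  set jN : ℕ → Fin p := fun n => if h : n - 1 < e+2 then (f ⟨n-1,h⟩).2.2
    else (f ⟨0, by omega⟩).2.2 with hjN
  set cN : ℕ → C := fun n => if n = 0 then uN 0 else wN (n-1) * uN n with hcN
  have hre := regroup (e+2) uN vN wN (by simp [huN])
  have hfun1 : (fun r : Fin (e+2) => b (f r).1 * a ((f r).2.2) * b (f r).2.1)
      = fun r : Fin (e+2) => uN r * vN r * wN r := by
    funext r
    simp [huN, hvN, hwN, r.isLt]
  have hc0 : cN 0 = uN 0 := by simp [hcN]
  have hfun2 : (fun r : Fin (e+2) => vN (r:ℕ) * (wN r * uN ((r:ℕ)+1)))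
      = fun r : Fin (e+2) => a (jN ((r:ℕ)+1)) * cN ((r:ℕ)+1) := by
    funext r
    have h1 : ((r:ℕ)+1) - 1 = (r:ℕ) := rfl
    simp [hjN, hvN, hcN, h1, r.isLt]
  have hu : ∀ n, uN n ∈ Bsub := by
    intro n; rw [huN]; dsimp only; split
    · exact hbB _
    · exact Subalgebra.one_mem _
  have hw : ∀ n, wN n ∈ Bsub := by
    intro n; rw [hwN]; dsimp only; split
    · exact hbB _
    · exact Subalgebra.one_mem _
  have hcB : ∀ r, cN r ∈ Bsub := by
    intro r; rw [hcN]; dsimp only; split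
    · exact hu 0
    · exact Subalgebra.mul_mem _ (hw _) (hu _)
  have hfun3 : (fun r : Fin (e+2) => a (jN ((r:ℕ)+1))) = fun r : Fin (e+2) => a ((f r).2.2) := by
    funext r
    have h1 : ((r:ℕ)+1) - 1 = (r:ℕ) := rfl
    simp [hjN, h1, r.isLt]
  rw [hfun1, hre, ← hc0, hfun2, hmono (e+2) (by omega) jN cN hcB, hfun3]
  congr 1
  rw [Finset.prod_range_succ', Finset.prod_range fun i => τ (cN (i+1))]
  congr 1
  · apply Finset.prod_congr rfl
    intro r _
    have h1 : ((r:ℕ)+1) - 1 = (r:ℕ) := rfl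
    by_cases h : (r:ℕ)+1 < e+2
    · rw [dif_pos h]
      simp only [hcN, if_neg (Nat.succ_ne_zero _), h1, hwN, huN, dif_pos r.isLt,
        dif_pos h, Fin.eta]
      exact hτbb' _ _
    · rw [dif_neg h]
      simp only [hcN, if_neg (Nat.succ_ne_zero _), h1, hwN, huN, dif_pos r.isLt,
        dif_neg h, Fin.eta, mul_one]
      exact hτb' _
  · simp only [hcN, if_pos rfl, huN, dif_pos (by omega : 0 < e+2)]
    rw [show (⟨0, by omega⟩ : Fin (e+2)) = 0 from rfl]
    exact hτb' _

theorem collapse (p q e : ℕ) (lam : Fin (q+1) → Fin (q+1) → Fin p → ℂ)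
    (Ω : (Fin (e+2) → Fin p) → ℂ) :
    (∑ f : Fin (e+2) → Fin (q+1) × Fin (q+1) × Fin p,
      (∏ r : Fin (e+2), lam (f r).1 (f r).2.1 (f r).2.2)
        * (Ω (fun r => (f r).2.2)
          * ((∏ r : Fin (e+2), (if h : (r:ℕ)+1 < e+2
                then (if (f r).2.1 = (f ⟨(r:ℕ)+1, h⟩).1 then (1:ℂ) else 0)
                else (if (f r).2.1 = 0 then (1:ℂ) else 0)))
            * (if (f 0).1 = 0 then (1:ℂ) else 0))))
    = ∑ ii : Fin (e+1) → Fin (q+1), ∑ jj : Fin (e+2) → Fin p,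
        lam 0 (ii 0) (jj 0)
          * (∏ t : Fin e, lam (ii t.castSucc) (ii t.succ) (jj t.succ.castSucc))
          * lam (ii (Fin.last e)) 0 (jj (Fin.last (e+1))) * Ω jj := by
  classical
  set T : (Fin (e+2) → Fin (q+1) × Fin (q+1) × Fin p) → ℂ := fun f =>
      (∏ r : Fin (e+2), lam (f r).1 (f r).2.1 (f r).2.2)
        * (Ω (fun r => (f r).2.2)
          * ((∏ r : Fin (e+2), (if h : (r:ℕ)+1 < e+2
                then (if (f r).2.1 = (f ⟨(r:ℕ)+1, h⟩).1 then (1:ℂ) else 0)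
                else (if (f r).2.1 = 0 then (1:ℂ) else 0)))
            * (if (f 0).1 = 0 then (1:ℂ) else 0))) with hT
  set F : (Fin (e+1) → Fin (q+1)) × (Fin (e+2) → Fin p)
      → (Fin (e+2) → Fin (q+1) × Fin (q+1) × Fin p) :=
    fun z r => (Fin.cons (α := fun _ => Fin (q+1)) 0 z.1 r,
      Fin.snoc (α := fun _ => Fin (q+1)) z.1 0 r, z.2 r) with hF
  have hsnoc0 : ∀ ii : Fin (e+1) → Fin (q+1),
      Fin.snoc (α := fun _ => Fin (q+1)) ii 0 (0 : Fin (e+2)) = ii 0 := by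
    intro ii
    rw [show (0 : Fin (e+2)) = Fin.castSucc 0 from rfl, Fin.snoc_castSucc]
  have hconslast : ∀ ii : Fin (e+1) → Fin (q+1),
      Fin.cons (α := fun _ => Fin (q+1)) 0 ii (Fin.last (e+1)) = ii (Fin.last e) := by
    intro ii
    rw [← Fin.succ_last, Fin.cons_succ]
  have hinj : Function.Injective F := by
    intro z1 z2 h
    have h' : ∀ r, F z1 r = F z2 r := fun r => congrFun h r
    refine Prod.ext ?_ ?_
    · funext t
      have := congrArg (fun w => w.2.1) (h' t.castSucc)
      simpa [hF, Fin.snoc_castSucc] using this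
    · funext r
      have := congrArg (fun w => w.2.2) (h' r)
      simpa [hF] using this
  have hzero : ∀ f ∈ (Finset.univ : Finset (Fin (e+2) → Fin (q+1) × Fin (q+1) × Fin p)),
      f ∉ Finset.image F Finset.univ → T f = 0 := by
    intro f _ hf
    by_contra hne
    apply hf
    have h1 : (Ω (fun r => (f r).2.2)
          * ((∏ r : Fin (e+2), (if h : (r:ℕ)+1 < e+2
                then (if (f r).2.1 = (f ⟨(r:ℕ)+1, h⟩).1 then (1:ℂ) else 0)
                else (if (f r).2.1 = 0 then (1:ℂ) else 0)))
            * (if (f 0).1 = 0 then (1:ℂ) else 0))) ≠ 0 := right_ne_zero_of_mul hne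
    have h2 := right_ne_zero_of_mul h1
    have hP := left_ne_zero_of_mul h2
    have hD := right_ne_zero_of_mul h2
    have hx0 : (f 0).1 = 0 := by
      by_contra hx; simp [hx] at hD
    have hchain : ∀ (r : Fin (e+2)) (h : (r:ℕ)+1 < e+2), (f r).2.1 = (f ⟨(r:ℕ)+1, h⟩).1 := by
      intro r h
      have := Finset.prod_ne_zero_iff.mp hP r (Finset.mem_univ r)
      rw [dif_pos h] at this
      by_contra hc; simp [hc] at this
    have hlast : (f (Fin.last (e+1))).2.1 = 0 := by
      have := Finset.prod_ne_zero_iff.mp hP (Fin.last (e+1)) (Finset.mem_univ _)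
      rw [dif_neg (by simp)] at this
      by_contra hc; simp [hc] at this
    refine Finset.mem_image.mpr ⟨(fun t => (f t.castSucc).2.1, fun r => (f r).2.2),
      Finset.mem_univ _, ?_⟩
    funext r
    simp only [hF]
    refine Prod.ext ?_ (Prod.ext ?_ rfl)
    · show Fin.cons (α := fun _ => Fin (q+1)) 0 (fun t : Fin (e+1) => (f t.castSucc).2.1) r
        = (f r).1
      induction r using Fin.cases with
      | zero => rw [Fin.cons_zero]; exact hx0.symm
      | succ t =>
          rw [Fin.cons_succ]
          have h : ((t.castSucc : Fin (e+2)) : ℕ) + 1 < e + 2 := by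
            have := t.isLt
            simp only [Fin.coe_castSucc]
            omega
          have h2 : (⟨((t.castSucc : Fin (e+2)) : ℕ) + 1, h⟩ : Fin (e+2)) = t.succ :=
            Fin.ext (by simp)
          have := hchain t.castSucc h
          rw [h2] at this
          exact this
    · show Fin.snoc (α := fun _ => Fin (q+1)) (fun t : Fin (e+1) => (f t.castSucc).2.1) 0 r
        = (f r).2.1
      induction r using Fin.lastCases with
      | last => rw [Fin.snoc_last]; exact hlast.symm
      | cast t => rw [Fin.snoc_castSucc]
  have himg : ∑ f ∈ Finset.image F Finset.univ, T f
      = ∑ z : (Fin (e+1) → Fin (q+1)) × (Fin (e+2) → Fin p), T (F z) :=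
    Finset.sum_image (fun z1 _ z2 _ h => hinj h)
  rw [show (∑ f : Fin (e+2) → Fin (q+1) × Fin (q+1) × Fin p, T f)
      = ∑ f ∈ Finset.image F Finset.univ, T f from
    (Finset.sum_subset (Finset.subset_univ _) hzero).symm, himg,
    Fintype.sum_prod_type]
  refine Finset.sum_congr rfl fun ii _ => Finset.sum_congr rfl fun jj _ => ?_
  have hδ1 : (if ((F (ii, jj)) 0).1 = 0 then (1:ℂ) else 0) = 1 := by
    simp [hF]
  have hδ2 : (∏ r : Fin (e+2), (if h : (r:ℕ)+1 < e+2
      then (if ((F (ii,jj)) r).2.1 = ((F (ii,jj)) ⟨(r:ℕ)+1, h⟩).1 then (1:ℂ) else 0)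
      else (if ((F (ii,jj)) r).2.1 = 0 then (1:ℂ) else 0))) = 1 := by
    apply Finset.prod_eq_one
    intro r _
    by_cases h : (r:ℕ)+1 < e+2
    · rw [dif_pos h]
      obtain ⟨t, rfl⟩ : ∃ t : Fin (e+1), r = t.castSucc :=
        ⟨⟨(r:ℕ), by omega⟩, Fin.ext (by simp)⟩
      have h2 : (⟨((t.castSucc : Fin (e+2)) : ℕ) + 1, h⟩ : Fin (e+2)) = t.succ :=
        Fin.ext (by simp)
      rw [h2, if_pos]
      simp only [hF, Fin.snoc_castSucc, Fin.cons_succ]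
    · rw [dif_neg h]
      have hr : r = Fin.last (e+1) := Fin.ext (by
        have := r.isLt
        simp only [Fin.val_last]
        omega)
      rw [hr, if_pos]
      simp only [hF, Fin.snoc_last]
  have hΛ : (∏ r : Fin (e+2), lam ((F (ii,jj)) r).1 ((F (ii,jj)) r).2.1 ((F (ii,jj)) r).2.2)
      = lam 0 (ii 0) (jj 0)
          * ((∏ t : Fin e, lam (ii t.castSucc) (ii t.succ) (jj t.succ.castSucc))
          * lam (ii (Fin.last e)) 0 (jj (Fin.last (e+1)))) := by
    rw [Fin.prod_univ_succ]
    refine congrArg₂ (· * ·) ?_ ?_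
    · simp only [hF, Fin.cons_zero, hsnoc0]
    · rw [Fin.prod_univ_castSucc]
      congr 1
      · apply Finset.prod_congr rfl
        intro t _
        simp only [hF]
        rw [Fin.cons_succ, Fin.succ_castSucc, Fin.snoc_castSucc]
      · simp only [hF]
        rw [Fin.succ_last, hconslast, Fin.snoc_last]
  rw [hT]
  dsimp only
  rw [hδ1, hδ2]
  have hΩ : Ω (fun r => ((F (ii,jj)) r).2.2) = Ω jj := rfl
  rw [hΩ, hΛ]
  ring

/-- Explicit moment formula in the monotone case. -/
theorem moment_formula_monotone {C : Type*} [Ring C] [Algebra ℂ C]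
    (Bsub : Subalgebra ℂ C) (ωt τ : C →ₗ[ℂ] ℂ)
    (p q : ℕ) (a : Fin p → C) (b : Fin (q + 1) → C)
    (hb0 : b 0 = 1) (hbB : ∀ i, b i ∈ Bsub)
    (hτ1 : τ 1 = 1)
    (hτb : ∀ i : Fin (q + 1), i ≠ 0 → τ (b i) = 0)
    (hτbb : ∀ i j : Fin (q + 1), i ≠ 0 → j ≠ 0 →
      τ (b i * b j) = if i = j then 1 else 0)
    (hmono : ∀ m : ℕ, 1 ≤ m → ∀ (j : ℕ → Fin p) (c : ℕ → C), (∀ r, c r ∈ Bsub) →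
      ωt (c 0 * (List.ofFn fun r : Fin m => a (j ((r : ℕ) + 1)) * c ((r : ℕ) + 1)).prod)
        = ωt ((List.ofFn fun r : Fin m => a (j ((r : ℕ) + 1))).prod)
          * ∏ r ∈ Finset.range (m + 1), τ (c r))
    (lam : Fin (q + 1) → Fin (q + 1) → Fin p → ℂ)
    (e : ℕ) :
    ωt ((∑ i₁ : Fin (q + 1), ∑ i₂ : Fin (q + 1), ∑ j : Fin p,
          lam i₁ i₂ j • (b i₁ * a j * b i₂)) ^ (e + 2))
      = ∑ ii : Fin (e + 1) → Fin (q + 1), ∑ jj : Fin (e + 2) → Fin p,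
          lam 0 (ii 0) (jj 0)
            * (∏ t : Fin e, lam (ii t.castSucc) (ii t.succ) (jj t.succ.castSucc))
            * lam (ii (Fin.last e)) 0 (jj (Fin.last (e + 1)))
            * ωt ((List.ofFn fun r : Fin (e + 2) => a (jj r)).prod) := by
  classical
  have hτb' : ∀ i : Fin (q+1), τ (b i) = if i = 0 then 1 else 0 := by
    intro i
    by_cases h : i = 0
    · simp [h, hb0, hτ1]
    · simp [h, hτb i h]
  have hτbb' : ∀ i j : Fin (q+1), τ (b i * b j) = if i = j then 1 else 0 := by
    intro i j
    by_cases hi : i = 0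
    · subst hi
      rw [hb0, one_mul, hτb' j]
      by_cases hj : j = 0
      · subst hj; simp
      · rw [if_neg hj, if_neg (fun h => hj h.symm)]
    · by_cases hj : j = 0
      · subst hj
        rw [hb0, mul_one, hτb' i]
      · exact hτbb i j hi hj
  have hP : (∑ i₁ : Fin (q+1), ∑ i₂ : Fin (q+1), ∑ j : Fin p,
        lam i₁ i₂ j • (b i₁ * a j * b i₂))
      = ∑ z : Fin (q+1) × Fin (q+1) × Fin p,
          lam z.1 z.2.1 z.2.2 • (b z.1 * a z.2.2 * b z.2.1) := by
    rw [Fintype.sum_prod_type]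
    refine Finset.sum_congr rfl fun i₁ _ => ?_
    rw [Fintype.sum_prod_type]
  rw [hP, sum_pow_fn, map_sum]
  refine (Finset.sum_congr rfl fun f _ => ?_).trans
    (collapse p q e lam (fun jj => ωt ((List.ofFn fun r : Fin (e+2) => a (jj r)).prod)))
  exact key_step Bsub ωt τ p q a b hbB hτb' hτbb' hmono lam e f
end
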